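/- For every real p > 4, ∫₀¹ |ln t|^{p-1} · t³/(1-t²)⁴ dt = Γ(p)/(3·2^{p+1}) · [ζ(p-3) - ζ(p-1)]. -/

import Mathlib

open Real MeasureTheory Set


lemma image_exp_neg : (fun x : ℝ => Real.exp (-x)) '' Set.Ioi 0 = Set.Ioo 0 1 := by
  ext t
  constructor
  · rintro ⟨x, hx, rfl⟩
    exact ⟨Real.exp_pos _, by rw [Real.exp_lt_one_iff]; simpa using hx⟩
  · intro ht
    exact ⟨-Real.log t, by simpa using Real.log_neg ht.1 ht.2, by
      show Real.exp (-(-Real.log t)) = t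
      rw [neg_neg, Real.exp_log ht.1]⟩

lemma hderiv_exp_neg : ∀ x ∈ Set.Ioi (0:ℝ),
    HasDerivWithinAt (fun x : ℝ => Real.exp (-x)) (-Real.exp (-x)) (Set.Ioi 0) x := by
  intro x _
  simpa [Function.comp_def] using ((Real.hasDerivAt_exp (-x)).comp x ((hasDerivAt_id x).neg)).hasDerivWithinAt

lemma injOn_exp_neg : Set.InjOn (fun x : ℝ => Real.exp (-x)) (Set.Ioi 0) :=
  (Real.exp_injective.comp neg_injective).injOn

lemma ptwise (a r : ℝ) {x : ℝ} (hx : x ∈ Set.Ioi (0:ℝ)) :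
    |(-Real.exp (-x))| • ((-Real.log (Real.exp (-x))) ^ (a-1) * (Real.exp (-x)) ^ (r-1))
      = x ^ (a-1) * Real.exp (-(r*x)) := by
  rw [Real.log_exp, neg_neg, smul_eq_mul, abs_neg, abs_of_pos (Real.exp_pos _),
    Real.rpow_def_of_pos (Real.exp_pos _), Real.log_exp]
  rw [mul_left_comm, ← Real.exp_add, show (-x) + (-x*(r-1)) = -(r*x) by ring]

lemma cov_eq (a r : ℝ) :
    ∫ t in Set.Ioo (0:ℝ) 1, (-Real.log t) ^ (a-1) * t ^ (r-1)
      = ∫ x in Set.Ioi (0:ℝ), x ^ (a-1) * Real.exp (-(r*x)) := by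
  rw [← image_exp_neg,
    integral_image_eq_integral_abs_deriv_smul measurableSet_Ioi hderiv_exp_neg injOn_exp_neg]
  exact setIntegral_congr_fun measurableSet_Ioi fun x hx => ptwise a r hx

lemma cov_val {a r : ℝ} (ha : 0 < a) (hr : 0 < r) :
    ∫ t in Set.Ioo (0:ℝ) 1, (-Real.log t) ^ (a-1) * t ^ (r-1)
      = (1/r) ^ a * Real.Gamma a := by
  rw [cov_eq, Real.integral_rpow_mul_exp_neg_mul_Ioi ha hr]

lemma cov_int {a r : ℝ} (ha : 0 < a) (hr : 0 < r) :
    IntegrableOn (fun t : ℝ => (-Real.log t) ^ (a-1) * t ^ (r-1)) (Set.Ioo 0 1) := by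
  rw [← image_exp_neg,
    integrableOn_image_iff_integrableOn_abs_deriv_smul measurableSet_Ioi hderiv_exp_neg
      injOn_exp_neg]
  have h : IntegrableOn (fun x : ℝ => x ^ (a-1) * Real.exp (-(r*x))) (Set.Ioi 0) := by
    have := integrableOn_rpow_mul_exp_neg_mul_rpow (show (-1:ℝ) < a-1 by linarith)
      (zero_lt_one : (0:ℝ) < 1) hr
    simpa [Real.rpow_one, neg_mul] using this
  exact h.congr_fun (fun x hx => (ptwise a r hx).symm) measurableSet_Ioi



lemma choose3 (n : ℕ) :
    ((n+3).choose 3 : ℝ) = ((n:ℝ)+1)*((n:ℝ)+2)*((n:ℝ)+3)/6 := by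
  have h : (n+3).choose 3 * 6 = (n+1)*((n+2)*(n+3)) := by
    have h0 := Nat.choose_mul_factorial_mul_factorial (Nat.le_add_left 3 n)
    have h1 : (n+3-3) = n := by omega
    rw [h1] at h0
    have h2 : Nat.factorial (n+3) = (n+3)*((n+2)*((n+1)*Nat.factorial n)) := by
      rw [show n+3 = (n+2)+1 from rfl, Nat.factorial_succ,
        show n+2 = (n+1)+1 from rfl, Nat.factorial_succ, Nat.factorial_succ]
    rw [h2, show Nat.factorial 3 = 6 from rfl] at h0
    exact Nat.eq_of_mul_eq_mul_right (Nat.factorial_pos n)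
      (show ((n+3).choose 3 * 6) * Nat.factorial n = ((n+1)*((n+2)*(n+3))) * Nat.factorial n by
        rw [h0]; ring)
  have h' : (((n+3).choose 3 * 6 : ℕ) : ℝ) = (((n+1)*((n+2)*(n+3)) : ℕ) : ℝ) := by rw [h]
  push_cast at h'
  field_simp
  linarith

lemma zshift {q : ℝ} (hq : 1 < q) :
    HasSum (fun n : ℕ => 1/((n:ℝ)+2)^q) ((∑' n : ℕ, 1/((n:ℝ)+1)^q) - 1) := by
  have hs0 : Summable (fun n : ℕ => 1/((n:ℝ))^q) := Real.summable_one_div_nat_rpow.2 hq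
  have hs : Summable (fun n : ℕ => 1/((n:ℝ)+1)^q) := by
    have := (summable_nat_add_iff 1).2 hs0
    simpa using this
  have hs2 : Summable (fun n : ℕ => 1/((n:ℝ)+2)^q) := by
    have := (summable_nat_add_iff 2).2 hs0
    simpa using this
  have h := hs.tsum_eq_zero_add
  rw [show ((0:ℕ):ℝ)+1 = 1 by norm_num, Real.one_rpow] at h
  have he : ∑' (b : ℕ), 1/(((b+1:ℕ):ℝ)+1)^q = ∑' (b:ℕ), 1/((b:ℝ)+2)^q :=
    tsum_congr fun b => by push_cast; ring_nf
  rw [he] at h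
  have hv : ∑' (b:ℕ), 1/((b:ℝ)+2)^q = (∑' n : ℕ, 1/((n:ℝ)+1)^q) - 1 := by linarith
  exact hv ▸ hs2.hasSum

lemma cov_nat_val {a : ℝ} (ha : 0 < a) (k : ℕ) :
    ∫ t in Set.Ioo (0:ℝ) 1, (-Real.log t) ^ (a-1) * t ^ k
      = (1/((k:ℝ)+1)) ^ a * Real.Gamma a := by
  rw [← cov_val ha (show (0:ℝ) < (k:ℝ)+1 by positivity)]
  refine setIntegral_congr_fun measurableSet_Ioo fun t ht => ?_
  rw [show ((k:ℝ)+1)-1 = (k:ℝ) by ring, Real.rpow_natCast]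

lemma cov_nat_int {a : ℝ} (ha : 0 < a) (k : ℕ) :
    IntegrableOn (fun t : ℝ => (-Real.log t) ^ (a-1) * t ^ k) (Set.Ioo 0 1) := by
  refine (cov_int ha (show (0:ℝ) < (k:ℝ)+1 by positivity)).congr_fun
    (fun t ht => ?_) measurableSet_Ioo
  rw [show ((k:ℝ)+1)-1 = (k:ℝ) by ring]
  simp only [Real.rpow_natCast]

-- the summand
noncomputable def g (p : ℝ) (n : ℕ) (t : ℝ) : ℝ :=
  ((n+3).choose 3 : ℝ) * ((-Real.log t) ^ (p-1) * t ^ (2*n+3))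

lemma g_int {p : ℝ} (hp : 4 < p) (n : ℕ) : IntegrableOn (g p n) (Set.Ioo (0:ℝ) 1) :=
  (cov_nat_int (by linarith : (0:ℝ) < p) (2*n+3)).const_mul _

lemma g_val {p : ℝ} (hp : 4 < p) (n : ℕ) :
    ∫ t in Set.Ioo (0:ℝ) 1, g p n t
      = ((n+3).choose 3 : ℝ) * ((1/(2*(n:ℝ)+4)) ^ p * Real.Gamma p) := by
  unfold g
  rw [MeasureTheory.integral_const_mul, cov_nat_val (by linarith : (0:ℝ) < p) (2*n+3)]
  rw [show ((2*n+3:ℕ):ℝ)+1 = 2*(n:ℝ)+4 by push_cast; ring]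

lemma term_eq {p : ℝ} (hp : 4 < p) (n : ℕ) :
    ((n+3).choose 3 : ℝ) * ((1/(2*(n:ℝ)+4)) ^ p * Real.Gamma p)
      = Real.Gamma p/(6*(2:ℝ)^p) * (1/((n:ℝ)+2)^(p-3) - 1/((n:ℝ)+2)^(p-1)) := by
  have hm : (0:ℝ) < (n:ℝ)+2 := by positivity
  have hmp : (0:ℝ) < ((n:ℝ)+2)^p := Real.rpow_pos_of_pos hm p
  have h2p : (0:ℝ) < (2:ℝ)^p := Real.rpow_pos_of_pos two_pos p
  have e2 : ((1:ℝ)/(2*(n:ℝ)+4))^p = 1/((2:ℝ)^p * ((n:ℝ)+2)^p) := by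
    rw [show 2*(n:ℝ)+4 = 2*((n:ℝ)+2) by ring,
      Real.div_rpow zero_le_one (by positivity), Real.one_rpow,
      Real.mul_rpow (by norm_num) hm.le]
  have e3 : ((n:ℝ)+2)^(p-3) = ((n:ℝ)+2)^p / ((n:ℝ)+2)^3 := by
    rw [Real.rpow_sub hm, show (3:ℝ)=((3:ℕ):ℝ) by norm_num, Real.rpow_natCast]
  have e1 : ((n:ℝ)+2)^(p-1) = ((n:ℝ)+2)^p / ((n:ℝ)+2) := by
    rw [Real.rpow_sub hm, Real.rpow_one]
  rw [choose3, e2, e3, e1, one_div_div, one_div_div]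
  field_simp
  ring

noncomputable def Z (q : ℝ) : ℝ := ∑' n : ℕ, 1/((n:ℝ)+1)^q

lemma hasSum_V {p : ℝ} (hp : 4 < p) :
    HasSum (fun n : ℕ => ∫ t in Set.Ioo (0:ℝ) 1, g p n t)
      (Real.Gamma p/(6*(2:ℝ)^p) * (Z (p-3) - Z (p-1))) := by
  have h3 := zshift (show (1:ℝ) < p-3 by linarith)
  have h1 := zshift (show (1:ℝ) < p-1 by linarith)
  have h := (h3.sub h1).mul_left (Real.Gamma p/(6*(2:ℝ)^p))
  have he : (fun n : ℕ => Real.Gamma p/(6*(2:ℝ)^p) *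
        (1/((n:ℝ)+2)^(p-3) - 1/((n:ℝ)+2)^(p-1)))
      = fun n => ∫ t in Set.Ioo (0:ℝ) 1, g p n t :=
    funext fun n => by rw [g_val hp, term_eq hp]
  rw [he] at h
  convert h using 1
  · rfl
  unfold Z
  ring

lemma ptsumf {p : ℝ} {t : ℝ} (ht : t ∈ Set.Ioo (0:ℝ) 1) :
    HasSum (fun n : ℕ => g p n t) (|Real.log t| ^ (p-1) * t ^ 3 / (1 - t^2)^4) := by
  have h2 : ‖t^2‖ < 1 := by
    rw [Real.norm_eq_abs, abs_of_nonneg (sq_nonneg t)]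
    nlinarith [ht.1, ht.2]
  have h := (hasSum_choose_mul_geometric_of_norm_lt_one 3 h2).mul_left
    ((-Real.log t)^(p-1) * t^3)
  have he : (fun n : ℕ => (-Real.log t)^(p-1) * t^3 * (((n+3).choose 3 : ℝ) * (t^2)^n))
      = fun n => g p n t := funext fun n => by unfold g; ring
  rw [he] at h
  convert h using 1
  · rfl
  rw [abs_of_neg (Real.log_neg ht.1 ht.2)]
  ring

lemma g_nonneg {p : ℝ} (n : ℕ) {t : ℝ} (ht : t ∈ Set.Ioo (0:ℝ) 1) : 0 ≤ g p n t := by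
  have hl : 0 ≤ -Real.log t := neg_nonneg.2 (Real.log_nonpos ht.1.le ht.2.le)
  exact mul_nonneg (Nat.cast_nonneg _)
    (mul_nonneg (Real.rpow_nonneg hl _) (pow_nonneg ht.1.le _))

lemma main_real {p : ℝ} (hp : 4 < p) :
    ∫ t in Set.Ioo (0:ℝ) 1, |Real.log t| ^ (p - 1) * t ^ 3 / (1 - t ^ 2) ^ 4
      = Real.Gamma p/(6*(2:ℝ)^p) * (Z (p-3) - Z (p-1)) := by
  have hint : ∀ n : ℕ, Integrable (g p n) (volume.restrict (Set.Ioo (0:ℝ) 1)) :=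
    fun n => g_int hp n
  have hnorm : ∀ n : ℕ, ∫ t in Set.Ioo (0:ℝ) 1, ‖g p n t‖
      = ∫ t in Set.Ioo (0:ℝ) 1, g p n t :=
    fun n => setIntegral_congr_fun measurableSet_Ioo fun t ht =>
      Real.norm_of_nonneg (g_nonneg n ht)
  have hsum := hasSum_V hp
  have hs : Summable fun n : ℕ => ∫ t in Set.Ioo (0:ℝ) 1, ‖g p n t‖ := by
    simp only [hnorm]
    exact hsum.summable
  have key := MeasureTheory.hasSum_integral_of_summable_integral_norm hint hs
  have heq : ∫ t in Set.Ioo (0:ℝ) 1, (∑' n, g p n t)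
      = ∫ t in Set.Ioo (0:ℝ) 1, |Real.log t| ^ (p - 1) * t ^ 3 / (1 - t ^ 2) ^ 4 :=
    setIntegral_congr_fun measurableSet_Ioo fun t ht => (ptsumf ht).tsum_eq
  rw [heq] at key
  exact (key.unique hsum)

lemma zeta_ofReal {q : ℝ} (hq : 1 < q) : riemannZeta (q : ℂ) = (Z q : ℂ) := by
  rw [zeta_eq_tsum_one_div_nat_add_one_cpow (by simpa using hq), Z, Complex.ofReal_tsum]
  refine tsum_congr fun n => ?_
  rw [Complex.ofReal_div, Complex.ofReal_one, Complex.ofReal_cpow (by positivity)]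
  push_cast
  ring

/-- For real `p > 4`, `∫₀¹ |ln t|^(p-1) t³/(1-t²)⁴ dt = Γ(p)/(3·2^(p+1)) (ζ(p-3) - ζ(p-1))`. -/
theorem stmt6 (p : ℝ) (hp : 4 < p) :
    ((∫ t in Set.Ioo (0 : ℝ) 1, |Real.log t| ^ (p - 1) * t ^ 3 / (1 - t ^ 2) ^ 4 : ℝ) : ℂ)
    = (Real.Gamma p / (3 * 2 ^ (p + 1)) : ℝ)
      * (riemannZeta ((p : ℂ) - 3) - riemannZeta ((p : ℂ) - 1)) := by
  rw [main_real hp, show (p:ℂ) - 3 = ((p-3:ℝ):ℂ) by push_cast; ring,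
    show (p:ℂ) - 1 = ((p-1:ℝ):ℂ) by push_cast; ring,
    zeta_ofReal (by linarith), zeta_ofReal (by linarith)]
  norm_cast
  rw [Real.rpow_add two_pos p 1, Real.rpow_one]
  ring
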